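/- For m ∈ {1, 2} and R > 0, define η_m(R) = (tanh(R/2))^{2m} sinh R / ∫₀^R (tanh(r/2))^{2m} sinh r dr. Then the function R ↦ η_m(R) · sinh(R/2) is strictly increasing on (0, +∞). -/

import Mathlib

open Real Set

private lemma key_ratio (f N φ : ℝ → ℝ) (hf : Continuous f) (hfpos : ∀ x, 0 < x → 0 < f x)
    (hN0 : N 0 = 0) (hNc : Continuous N)
    (hN' : ∀ x, 0 < x → HasDerivAt N (f x * φ x) x)
    (hφ : ∀ a b, 0 < a → a < b → φ a < φ b) :
    StrictMonoOn (fun R => N R / ∫ r in (0:ℝ)..R, f r) (Ioi 0) := by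
  intro a ha b hb hab
  simp only [mem_Ioi] at ha hb
  set F : ℝ → ℝ := fun R => ∫ r in (0:ℝ)..R, f r with hFdef
  have hF' : ∀ x : ℝ, HasDerivAt F (f x) x := fun x =>
    intervalIntegral.integral_hasDerivAt_right (hf.intervalIntegrable _ _)
      (hf.stronglyMeasurableAtFilter _ _) hf.continuousAt
  have hFc : Continuous F :=
    continuous_iff_continuousAt.2 fun x => (hF' x).continuousAt
  have hF0 : F 0 = 0 := intervalIntegral.integral_same
  have hFa : 0 < F a := by
    apply intervalIntegral.intervalIntegral_pos_of_pos_on (hf.intervalIntegrable _ _) _ ha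
    exact fun x hx => hfpos x hx.1
  have hFab : 0 < F b - F a := by
    have h1 : F a + ∫ r in a..b, f r = F b :=
      intervalIntegral.integral_add_adjacent_intervals (hf.intervalIntegrable _ _)
        (hf.intervalIntegrable _ _)
    have h2 : 0 < ∫ r in a..b, f r := by
      apply intervalIntegral.intervalIntegral_pos_of_pos_on (hf.intervalIntegrable _ _) _ hab
      exact fun x hx => hfpos x (ha.trans hx.1)
    linarith
  have hFb : 0 < F b := by linarith
  obtain ⟨c, hc, hceq⟩ := exists_ratio_hasDerivAt_eq_ratio_slope F f ha
    (hFc.continuousOn) (fun x _ => hF' x) N (fun x => f x * φ x)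
    (hNc.continuousOn) (fun x hx => hN' x hx.1)
  obtain ⟨d, hd, hdeq⟩ := exists_ratio_hasDerivAt_eq_ratio_slope F f hab
    (hFc.continuousOn) (fun x _ => hF' x) N (fun x => f x * φ x)
    (hNc.continuousOn) (fun x hx => hN' x (ha.trans hx.1))
  rw [hN0, hF0, sub_zero, sub_zero] at hceq
  have hfc : 0 < f c := hfpos c hc.1
  have hfd : 0 < f d := hfpos d (ha.trans hd.1)
  have hNa : N a = F a * φ c :=
    mul_right_cancel₀ (ne_of_gt hfc) (by linarith [hceq] : N a * f c = F a * φ c * f c)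
  have hNb : N b - N a = (F b - F a) * φ d :=
    mul_right_cancel₀ (ne_of_gt hfd)
      (by linarith [hdeq] : (N b - N a) * f d = (F b - F a) * φ d * f d)
  have hφcd : φ c < φ d := hφ c d hc.1 (hc.2.trans hd.1)
  show N a / F a < N b / F b
  rw [div_lt_div_iff₀ hFa hFb]
  nlinarith [mul_pos hFab (sub_pos.2 hφcd)]

private lemma cont_aux (e : ℕ) : Continuous (fun r : ℝ => Real.tanh (r/2)^e * Real.sinh r) := by
  have h : (fun r : ℝ => Real.tanh (r/2)^e * Real.sinh r)
      = fun r : ℝ => (Real.sinh (r/2)/Real.cosh (r/2))^e * Real.sinh r :=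
    funext fun r => by rw [Real.tanh_eq_sinh_div_cosh]
  rw [h]
  exact (((Real.continuous_sinh.comp (continuous_id.div_const 2)).div
    (Real.continuous_cosh.comp (continuous_id.div_const 2))
    (fun x => (Real.cosh_pos _).ne')).pow e).mul Real.continuous_sinh

private lemma cont_aux2 (e : ℕ) :
    Continuous (fun r : ℝ => Real.tanh (r/2)^e * Real.sinh r * Real.sinh (r/2)) :=
  (cont_aux e).mul (Real.continuous_sinh.comp (continuous_id.div_const 2))

private lemma pos_aux (e : ℕ) (x : ℝ) (hx : 0 < x) : 0 < Real.tanh (x/2)^e * Real.sinh x := by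
  have h1 : 0 < Real.tanh (x/2) := by
    rw [Real.tanh_eq_sinh_div_cosh]
    exact div_pos (by positivity) (Real.cosh_pos _)
  exact mul_pos (pow_pos h1 e) (by positivity)

private lemma alg1 (s c S C : ℝ) (hc : c ≠ 0) (hS : S = 2*s*c) (hC : C = 2*c^2-1)
    (h2 : c^2 = s^2+1) :
    (s/c)^(2*1) * S * ((3*c^2+1)/(2*c))
      = (((2*1:ℕ):ℝ) * (s/c)^(2*1-1) * ((c*(1/2)*c - s*(s*(1/2)))/c^2) * S + (s/c)^(2*1)*C)*s
        + (s/c)^(2*1)*S*(c*(1/2)) := by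
  subst hS hC
  norm_num
  field_simp
  ring_nf
  linear_combination (-2*s^3) * h2

private lemma alg2 (s c S C : ℝ) (hc : c ≠ 0) (hS : S = 2*s*c) (hC : C = 2*c^2-1)
    (h2 : c^2 = s^2+1) :
    (s/c)^(2*2) * S * (3*(c^2+1)/(2*c))
      = (((2*2:ℕ):ℝ) * (s/c)^(2*2-1) * ((c*(1/2)*c - s*(s*(1/2)))/c^2) * S + (s/c)^(2*2)*C)*s
        + (s/c)^(2*2)*S*(c*(1/2)) := by
  subst hS hC
  norm_num
  field_simp
  ring_nf
  linear_combination (-4*s^5) * h2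

theorem eta_sinh_half_strictMono (m : ℕ) (hm : m = 1 ∨ m = 2) :
    StrictMonoOn
      (fun R : ℝ =>
        (Real.tanh (R/2)^(2*m) * Real.sinh R /
          ∫ r in (0:ℝ)..R, Real.tanh (r/2)^(2*m) * Real.sinh r) * Real.sinh (R/2))
      (Set.Ioi 0) := by
  simp only [div_mul_eq_mul_div]
  rcases hm with hm | hm <;> subst hm
  · apply key_ratio (fun r => Real.tanh (r/2)^(2*1) * Real.sinh r)
      (fun r => Real.tanh (r/2)^(2*1) * Real.sinh r * Real.sinh (r/2))
      (fun x => (3*Real.cosh (x/2)^2+1)/(2*Real.cosh (x/2)))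
      (cont_aux _) (pos_aux _) (by simp) (cont_aux2 _)
    · intro x hx
      have h2 : HasDerivAt (fun y : ℝ => y/2) (1/2) x := (hasDerivAt_id x).div_const 2
      have hs : HasDerivAt (fun y => Real.sinh (y/2)) (Real.cosh (x/2) * (1/2)) x :=
        by have := (Real.hasDerivAt_sinh (x/2)).comp x h2; exact this
      have hc : HasDerivAt (fun y => Real.cosh (y/2)) (Real.sinh (x/2) * (1/2)) x :=
        by have := (Real.hasDerivAt_cosh (x/2)).comp x h2; exact this
      have hcne : Real.cosh (x/2) ≠ 0 := (Real.cosh_pos _).ne'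
      have hq : HasDerivAt (fun y => Real.sinh (y/2)/Real.cosh (y/2))
          ((Real.cosh (x/2) * (1/2) * Real.cosh (x/2)
            - Real.sinh (x/2) * (Real.sinh (x/2) * (1/2))) / Real.cosh (x/2)^2) x :=
        hs.div hc hcne
      have hD := ((hq.pow (2*1)).mul (Real.hasDerivAt_sinh x)).mul hs
      have heq : (fun r => Real.tanh (r/2)^(2*1) * Real.sinh r * Real.sinh (r/2))
          = fun r => (Real.sinh (r/2)/Real.cosh (r/2))^(2*1) * Real.sinh r * Real.sinh (r/2) :=
        funext fun r => by rw [Real.tanh_eq_sinh_div_cosh]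
      rw [heq]
      refine hD.congr_deriv ?_
      have hx2 : 2*(x/2) = x := by ring
      have hc2 : Real.cosh (x/2)^2 = Real.sinh (x/2)^2 + 1 := Real.cosh_sq (x/2)
      have hsx : Real.sinh x = 2*Real.sinh (x/2)*Real.cosh (x/2) := by
        have h := Real.sinh_two_mul (x/2); rw [hx2] at h; linarith
      have hcx : Real.cosh x = 2*Real.cosh (x/2)^2 - 1 := by
        have h := Real.cosh_two_mul (x/2); rw [hx2] at h; linarith
      rw [Real.tanh_eq_sinh_div_cosh]
      exact (alg1 _ _ _ _ hcne hsx hcx hc2).symm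
    · intro a b ha hab
      have h1 : (1:ℝ) ≤ Real.cosh (a/2) := Real.one_le_cosh _
      have h2 : Real.cosh (a/2) < Real.cosh (b/2) := by
        rw [Real.cosh_lt_cosh, abs_of_pos (by linarith), abs_of_pos (by linarith)]
        linarith
      have hp1 : (0:ℝ) < Real.cosh (a/2) := Real.cosh_pos _
      have hp2 : (0:ℝ) < Real.cosh (b/2) := Real.cosh_pos _
      have h5 : (0:ℝ) < 3*(Real.cosh (a/2)*Real.cosh (b/2)) - 1 := by nlinarith
      rw [div_lt_div_iff₀ (by positivity) (by positivity)]
      nlinarith [mul_pos (sub_pos.2 h2) h5]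
  · apply key_ratio (fun r => Real.tanh (r/2)^(2*2) * Real.sinh r)
      (fun r => Real.tanh (r/2)^(2*2) * Real.sinh r * Real.sinh (r/2))
      (fun x => 3*(Real.cosh (x/2)^2+1)/(2*Real.cosh (x/2)))
      (cont_aux _) (pos_aux _) (by simp) (cont_aux2 _)
    · intro x hx
      have h2 : HasDerivAt (fun y : ℝ => y/2) (1/2) x := (hasDerivAt_id x).div_const 2
      have hs : HasDerivAt (fun y => Real.sinh (y/2)) (Real.cosh (x/2) * (1/2)) x :=
        by have := (Real.hasDerivAt_sinh (x/2)).comp x h2; exact this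
      have hc : HasDerivAt (fun y => Real.cosh (y/2)) (Real.sinh (x/2) * (1/2)) x :=
        by have := (Real.hasDerivAt_cosh (x/2)).comp x h2; exact this
      have hcne : Real.cosh (x/2) ≠ 0 := (Real.cosh_pos _).ne'
      have hq : HasDerivAt (fun y => Real.sinh (y/2)/Real.cosh (y/2))
          ((Real.cosh (x/2) * (1/2) * Real.cosh (x/2)
            - Real.sinh (x/2) * (Real.sinh (x/2) * (1/2))) / Real.cosh (x/2)^2) x :=
        hs.div hc hcne
      have hD := ((hq.pow (2*2)).mul (Real.hasDerivAt_sinh x)).mul hs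
      have heq : (fun r => Real.tanh (r/2)^(2*2) * Real.sinh r * Real.sinh (r/2))
          = fun r => (Real.sinh (r/2)/Real.cosh (r/2))^(2*2) * Real.sinh r * Real.sinh (r/2) :=
        funext fun r => by rw [Real.tanh_eq_sinh_div_cosh]
      rw [heq]
      refine hD.congr_deriv ?_
      have hx2 : 2*(x/2) = x := by ring
      have hc2 : Real.cosh (x/2)^2 = Real.sinh (x/2)^2 + 1 := Real.cosh_sq (x/2)
      have hsx : Real.sinh x = 2*Real.sinh (x/2)*Real.cosh (x/2) := by
        have h := Real.sinh_two_mul (x/2); rw [hx2] at h; linarith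
      have hcx : Real.cosh x = 2*Real.cosh (x/2)^2 - 1 := by
        have h := Real.cosh_two_mul (x/2); rw [hx2] at h; linarith
      rw [Real.tanh_eq_sinh_div_cosh]
      exact (alg2 _ _ _ _ hcne hsx hcx hc2).symm
    · intro a b ha hab
      have h1 : (1:ℝ) ≤ Real.cosh (a/2) := Real.one_le_cosh _
      have h2 : Real.cosh (a/2) < Real.cosh (b/2) := by
        rw [Real.cosh_lt_cosh, abs_of_pos (by linarith), abs_of_pos (by linarith)]
        linarith
      have hp1 : (0:ℝ) < Real.cosh (a/2) := Real.cosh_pos _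
      have hp2 : (0:ℝ) < Real.cosh (b/2) := Real.cosh_pos _
      have h5 : (0:ℝ) < Real.cosh (a/2)*Real.cosh (b/2) - 1 := by nlinarith
      rw [div_lt_div_iff₀ (by positivity) (by positivity)]
      nlinarith [mul_pos (sub_pos.2 h2) h5]
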